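/- arXiv:2506.01972 — 2 statements merged into one kernel-verified Lean document; each statement's English description precedes it below -/
import Mathlib

section
/- Let m, β ∈ ℝ and σ > 0. Set c = Real.sqrt ((m - β)² + σ²) and p = (1 + (m - β)/c)/2. Then the two-point measure P = p·δ_{β+c} + (1-p)·δ_{β-c} (where δ_y denotes the Dirac measure at y) is a Borel probability measure on ℝ with mean m, variance σ², and ∫ max(x - β, 0) dP(x) = ((m - β) + Real.sqrt ((m - β)² + σ²)) / 2. -/
open MeasureTheory

lemma integrable_dirac'' {f : ℝ → ℝ} (hf : Measurable f) (a : ℝ) :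
    Integrable f (Measure.dirac a) := by
  refine ⟨hf.aestronglyMeasurable, ?_⟩
  rw [HasFiniteIntegral, MeasureTheory.lintegral_dirac]
  exact ENNReal.coe_lt_top

lemma integral_two_point (a b : ℝ) (ha : 0 ≤ a) (hb : 0 ≤ b) (x y : ℝ)
    {f : ℝ → ℝ} (hf : Measurable f) :
    ∫ z, f z ∂(ENNReal.ofReal a • Measure.dirac x + ENNReal.ofReal b • Measure.dirac y)
      = a * f x + b * f y := by
  rw [integral_add_measure ((integrable_dirac'' hf x).smul_measure ENNReal.ofReal_ne_top)
      ((integrable_dirac'' hf y).smul_measure ENNReal.ofReal_ne_top),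
    integral_smul_measure, integral_smul_measure, integral_dirac, integral_dirac,
    ENNReal.toReal_ofReal ha, ENNReal.toReal_ofReal hb, smul_eq_mul, smul_eq_mul]

theorem two_point_measure_attains_positive_part_bound
    (m β σ : ℝ) (hσ : 0 < σ) (c p : ℝ)
    (hc : c = Real.sqrt ((m - β) ^ 2 + σ ^ 2))
    (hp : p = (1 + (m - β) / c) / 2)
    (P : Measure ℝ)
    (hP : P = ENNReal.ofReal p • Measure.dirac (β + c) +
              ENNReal.ofReal (1 - p) • Measure.dirac (β - c)) :
    IsProbabilityMeasure P ∧
    (∫ x, x ∂P) = m ∧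
    (∫ x, (x - m) ^ 2 ∂P) = σ ^ 2 ∧
    (∫ x, max (x - β) 0 ∂P) = ((m - β) + Real.sqrt ((m - β) ^ 2 + σ ^ 2)) / 2 := by
  have hcpos : 0 < c := by
    rw [hc]; exact Real.sqrt_pos.mpr (by positivity)
  have hc2 : c ^ 2 = (m - β) ^ 2 + σ ^ 2 := by
    rw [hc]; exact Real.sq_sqrt (by positivity)
  have habs : |m - β| ≤ c := by
    rw [hc, ← Real.sqrt_sq_eq_abs]
    exact Real.sqrt_le_sqrt (by nlinarith)
  have hd1 : -c ≤ m - β := (abs_le.mp habs).1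
  have hd2 : m - β ≤ c := (abs_le.mp habs).2
  have hp0 : 0 ≤ p := by
    rw [hp]
    have : -1 ≤ (m - β) / c := by
      rw [le_div_iff₀ hcpos]; linarith
    linarith
  have hp1 : p ≤ 1 := by
    rw [hp]
    have : (m - β) / c ≤ 1 := by
      rw [div_le_one hcpos]; linarith
    linarith
  have hp1' : 0 ≤ 1 - p := by linarith
  have hI : ∀ {f : ℝ → ℝ}, Measurable f →
      ∫ x, f x ∂P = p * f (β + c) + (1 - p) * f (β - c) := by
    intro f hf
    rw [hP]; exact integral_two_point p (1 - p) hp0 hp1' _ _ hf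
  have hcne : c ≠ 0 := ne_of_gt hcpos
  have hpc : p * c = (c + (m - β)) / 2 := by
    rw [hp]; field_simp
  refine ⟨?_, ?_, ?_, ?_⟩
  · constructor
    rw [hP]
    simp only [Measure.add_apply, Measure.smul_apply, Measure.dirac_apply_of_mem
      (Set.mem_univ _), smul_eq_mul, mul_one]
    rw [← ENNReal.ofReal_add hp0 hp1']
    norm_num
  · rw [hI (f := fun x => x) measurable_id]
    linear_combination 2 * hpc
  · rw [hI (by measurability : Measurable fun x : ℝ => (x - m) ^ 2)]
    linear_combination hc2 + (-4 * (m - β)) * hpc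
  · rw [hI (by measurability : Measurable fun x : ℝ => max (x - β) 0)]
    have h1 : max (β + c - β) 0 = c := by
      rw [max_eq_left (by linarith)]; ring
    have h2 : max (β - c - β) 0 = 0 := by
      rw [max_eq_right (by linarith)]
    rw [h1, h2, ← hc]
    linarith [hpc]
end

section
/- Let α ∈ (0,1), Θ, θ⁰, μ ∈ ℝ and σ > 0. Then the following are equivalent: (i) every Borel probability measure P on ℝ with finite second moment, mean μ and variance σ² satisfies ⨅_{β ∈ ℝ} (β + (1-α)⁻¹ · ∫ max(Θx + θ⁰ - β, 0) dP(x)) ≤ 0; (ii) every Borel probability measure P on ℝ with finite second moment, mean μ and variance σ² satisfies P {x : Θx + θ⁰ ≤ 0} ≥ α. -/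
open MeasureTheory

noncomputable def twoPt (p a b : ℝ) : Measure ℝ :=
  ENNReal.ofReal p • Measure.dirac a + ENNReal.ofReal (1-p) • Measure.dirac b

lemma tp_apply (p a b : ℝ) {S : Set ℝ} (hS : MeasurableSet S) :
    twoPt p a b S = S.indicator (fun _ => ENNReal.ofReal p) a
      + S.indicator (fun _ => ENNReal.ofReal (1-p)) b := by
  simp only [twoPt, Measure.coe_add, Measure.coe_smul, Pi.add_apply, Pi.smul_apply,
    Measure.dirac_apply' _ hS, smul_eq_mul]
  by_cases ha : a ∈ S <;> by_cases hb : b ∈ S <;>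
    simp [ha, hb, Set.indicator_of_mem, Set.indicator_of_notMem]

lemma tp_isProb (p a b : ℝ) (h0 : 0 ≤ p) (h1 : p ≤ 1) :
    IsProbabilityMeasure (twoPt p a b) := by
  constructor
  rw [tp_apply _ _ _ MeasurableSet.univ]
  simp [← ENNReal.ofReal_add h0 (by linarith : (0:ℝ) ≤ 1 - p)]

lemma tp_integrable (p a b : ℝ) (f : ℝ → ℝ) : Integrable f (twoPt p a b) := by
  have h : ∀ c : ℝ, Integrable f (Measure.dirac c) := fun c =>
    (integrable_const (f c)).congr (ae_eq_dirac f).symm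
  exact ((h a).smul_measure ENNReal.ofReal_ne_top).add_measure
    ((h b).smul_measure ENNReal.ofReal_ne_top)

lemma tp_integral (p a b : ℝ) (h0 : 0 ≤ p) (h1 : p ≤ 1) (f : ℝ → ℝ) :
    ∫ x, f x ∂(twoPt p a b) = p * f a + (1-p) * f b := by
  have h : ∀ c : ℝ, Integrable f (Measure.dirac c) := fun c =>
    (integrable_const (f c)).congr (ae_eq_dirac f).symm
  rw [twoPt, integral_add_measure ((h a).smul_measure ENNReal.ofReal_ne_top)
    ((h b).smul_measure ENNReal.ofReal_ne_top), integral_smul_measure, integral_smul_measure,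
    integral_dirac, integral_dirac, ENNReal.toReal_ofReal h0,
    ENNReal.toReal_ofReal (by linarith : (0:ℝ) ≤ 1 - p)]
  simp [smul_eq_mul]

lemma tp_memL2 (p a b : ℝ) (h0 : 0 ≤ p) (h1 : p ≤ 1) : MemLp id 2 (twoPt p a b) := by
  have := tp_isProb p a b h0 h1
  refine MemLp.of_bound measurable_id.aestronglyMeasurable (max |a| |b|) ?_
  rw [ae_iff]
  have hm : MeasurableSet {x : ℝ | ¬ ‖id x‖ ≤ max |a| |b|} := by
    simp only [id_eq, Real.norm_eq_abs]
    exact (measurableSet_le (measurable_id.abs) measurable_const).compl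
  rw [tp_apply _ _ _ hm]
  rw [Set.indicator_of_notMem (by simp [Real.norm_eq_abs]),
    Set.indicator_of_notMem (by simp [Real.norm_eq_abs])]
  simp

section Moments
variable (P : Measure ℝ) [IsProbabilityMeasure P]

lemma int_affine (h1 : Integrable (fun x : ℝ => x) P) (c d : ℝ) :
    ∫ x, (c * x + d) ∂P = c * (∫ x, x ∂P) + d := by
  rw [integral_add (h1.const_mul c) (integrable_const d), integral_const_mul, integral_const]
  simp

lemma int_affine_sq (hL2 : MemLp id 2 P) (c d : ℝ) :
    ∫ x, (c * x + d)^2 ∂P = c^2 * (∫ x, x^2 ∂P) + 2*c*d*(∫ x, x ∂P) + d^2 := by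
  have hx2 : Integrable (fun x : ℝ => x^2) P := by simpa using hL2.integrable_sq
  have hx1 : Integrable (fun x : ℝ => x) P := hL2.integrable one_le_two
  calc ∫ x, (c*x+d)^2 ∂P = ∫ x, (c^2*x^2 + (2*c*d*x + d^2)) ∂P :=
        integral_congr_ae (Filter.Eventually.of_forall fun x => by ring)
    _ = _ := by
        have h3 : Integrable (fun x : ℝ => 2*c*d*x + d^2) P :=
          (hx1.const_mul (2*c*d)).add (integrable_const (d^2))
        rw [integral_add (hx2.const_mul _) h3,
          integral_add (hx1.const_mul _) (integrable_const _), integral_const_mul,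
          integral_const_mul, integral_const]
        simp [add_assoc]

end Moments

lemma cvar_le (α Θ θ0 μ σ : ℝ) (hα0 : 0 < α) (hα1 : α < 1) (hσ : 0 < σ)
    (hC : Θ*μ + θ0 + Real.sqrt (α/(1-α)) * (|Θ| * σ) ≤ 0)
    (P : Measure ℝ) (hP : IsProbabilityMeasure P) (hL2 : MemLp id 2 P)
    (hmean : (∫ x, x ∂P) = μ) (hvar : (∫ x, (x - μ)^2 ∂P) = σ^2) :
    (⨅ β : ℝ, (β + (1 - α)⁻¹ * ∫ x, max (Θ * x + θ0 - β) 0 ∂P)) ≤ 0 := by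
  have h1α : 0 < 1 - α := by linarith
  have hx1 : Integrable (fun x : ℝ => x) P := hL2.integrable one_le_two
  have hx2i : ∫ x, x^2 ∂P = σ^2 + μ^2 := by
    have h1 := int_affine_sq P hL2 1 (-μ)
    have h2 : ∫ x, (1*x + -μ)^2 ∂P = σ^2 := by
      rw [← hvar]; exact integral_congr_ae (.of_forall fun x => by ring)
    rw [h2, hmean] at h1; linarith [h1]
  set m := Θ*μ + θ0 with hm
  set s := |Θ| * σ with hs
  have hs0 : 0 ≤ s := mul_nonneg (abs_nonneg _) hσ.le
  set κ := Real.sqrt (α/(1-α)) with hκ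
  have hκ0 : 0 ≤ κ := Real.sqrt_nonneg _
  set g := Real.sqrt (α*(1-α)) with hg
  have hg2 : g^2 = α*(1-α) := Real.sq_sqrt (by nlinarith)
  have hgpos : 0 < g := Real.sqrt_pos.mpr (by nlinarith)
  have hκg : κ * g = α := by
    rw [hκ, hg, ← Real.sqrt_mul (by positivity)]
    rw [show α/(1-α) * (α*(1-α)) = α^2 by field_simp]
    exact Real.sqrt_sq hα0.le
  have hZint : ∀ β : ℝ, Integrable (fun x => Θ*x + θ0 - β) P := fun β =>
    ((hx1.const_mul Θ).add (integrable_const θ0)).sub (integrable_const β)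
  have hEZ : ∀ β : ℝ, ∫ x, (Θ*x + θ0 - β) ∂P = m - β := fun β => by
    rw [show (fun x => Θ*x + θ0 - β) = fun x => Θ*x + (θ0 - β) by funext x; ring]
    rw [int_affine P hx1 Θ (θ0 - β), hmean]; ring
  have hEZ2 : ∀ β : ℝ, ∫ x, (Θ*x + θ0 - β)^2 ∂P = s^2 + (m-β)^2 := fun β => by
    rw [show (fun x => (Θ*x + θ0 - β)^2) = fun x => (Θ*x + (θ0 - β))^2 by funext x; ring]
    rw [int_affine_sq P hL2 Θ (θ0 - β), hmean, hx2i]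
    have : |Θ| ^ 2 = Θ^2 := sq_abs Θ
    rw [hs, hm]; linear_combination (-σ^2) * this
  have hEabs : ∀ β : ℝ, ∫ x, |Θ*x + θ0 - β| ∂P ≤ Real.sqrt (s^2 + (m-β)^2) := by
    intro β
    have hZ2 : MemLp (fun x => Θ*x + θ0 - β) 2 P :=
      ((hL2.const_mul Θ).add (memLp_const θ0)).sub (memLp_const β)
    have habsL2 : MemLp (fun x => |Θ*x + θ0 - β|) 2 P := by
      simpa [Real.norm_eq_abs] using hZ2.norm
    have hv := ProbabilityTheory.variance_nonneg (fun x => |Θ*x + θ0 - β|) P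
    rw [ProbabilityTheory.variance_eq_sub habsL2] at hv
    simp only [Pi.pow_apply] at hv
    have he : ∫ x, |Θ*x + θ0 - β|^2 ∂P = s^2 + (m-β)^2 := by
      rw [← hEZ2 β]; exact integral_congr_ae (.of_forall fun x => by simp [sq_abs])
    rw [he] at hv
    have h0 : 0 ≤ ∫ x, |Θ*x + θ0 - β| ∂P := integral_nonneg fun x => abs_nonneg _
    exact (Real.le_sqrt h0 (by positivity)).mpr (by linarith)
  have hmaxint : ∀ β : ℝ, Integrable (fun x => max (Θ*x + θ0 - β) 0) P := fun β =>
    (hZint β).pos_part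
  have hmax : ∀ β : ℝ, ∫ x, max (Θ*x + θ0 - β) 0 ∂P
      = ((m - β) + ∫ x, |Θ*x + θ0 - β| ∂P) * 2⁻¹ := by
    intro β
    have hpt : ∀ x : ℝ, max (Θ*x + θ0 - β) 0 = ((Θ*x + θ0 - β) + |Θ*x + θ0 - β|) * 2⁻¹ := by
      intro x
      rcases le_or_gt 0 (Θ*x + θ0 - β) with h | h
      · rw [max_eq_left h, abs_of_nonneg h]; ring
      · rw [max_eq_right h.le, abs_of_neg h]; ring
    rw [integral_congr_ae (.of_forall hpt), integral_mul_const,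
      integral_add (hZint β) (hZint β).abs, hEZ]
  have hlb : ∀ β : ℝ, m ≤ β + (1 - α)⁻¹ * ∫ x, max (Θ*x + θ0 - β) 0 ∂P := by
    intro β
    have hnn : 0 ≤ ∫ x, max (Θ*x + θ0 - β) 0 ∂P :=
      integral_nonneg fun x => le_max_right _ _
    have hge : m - β ≤ ∫ x, max (Θ*x + θ0 - β) 0 ∂P := by
      rw [← hEZ β]
      exact integral_mono (hZint β) (hmaxint β) fun x => le_max_left _ _
    have hc1 : 1 ≤ (1 - α)⁻¹ := by
      rw [le_inv_comm₀ one_pos h1α]; linarith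
    rcases le_total β m with h | h
    · nlinarith
    · nlinarith [mul_nonneg (le_of_lt (by positivity : (0:ℝ) < (1-α)⁻¹)) hnn]
  have hg0 : g ≠ 0 := ne_of_gt hgpos
  have hκeq : κ = α / g := (eq_div_iff hg0).mpr hκg
  set t := (2*α-1)*s/(2*g) with ht
  have hsq : Real.sqrt (s^2 + (m - (m+t))^2) = s/(2*g) := by
    have he : s^2 + (m - (m+t))^2 = (s/(2*g))^2 := by
      rw [ht]; field_simp; linear_combination (4*s^2) * hg2
    rw [he, Real.sqrt_sq (by positivity)]
  have key : m + t + (1 - α)⁻¹ * (((m - (m+t)) + s/(2*g)) * 2⁻¹) = m + κ*s := by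
    rw [hκeq, ht]; field_simp; ring
  have hbdd : BddBelow (Set.range fun β : ℝ =>
      β + (1 - α)⁻¹ * ∫ x, max (Θ*x + θ0 - β) 0 ∂P) := by
    refine ⟨m, ?_⟩; rintro y ⟨β, rfl⟩; exact hlb β
  refine ciInf_le_of_le hbdd (m+t) ?_
  · have hI : ∫ x, max (Θ*x + θ0 - (m+t)) 0 ∂P
        ≤ ((m - (m+t)) + s/(2*g)) * 2⁻¹ := by
      rw [hmax (m+t)]
      have h3 := hEabs (m+t)
      rw [hsq] at h3
      linarith [h3]
    have h2 : (0:ℝ) < (1-α)⁻¹ := by positivity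
    calc (m+t) + (1 - α)⁻¹ * ∫ x, max (Θ*x + θ0 - (m+t)) 0 ∂P
        ≤ (m+t) + (1 - α)⁻¹ * (((m - (m+t)) + s/(2*g)) * 2⁻¹) :=
          add_le_add_right (mul_le_mul_of_nonneg_left hI h2.le) _
      _ = m + κ*s := key
      _ ≤ 0 := hC

lemma aux7 (α s t κ : ℝ) (h1α : 0 < 1-α) (hspos : 0 < s) (hκpos : 0 < κ)
    (hκ2 : κ^2*(1-α) = α) (hκs : κ*s ≤ t) : s^2/(s^2+t^2) ≤ 1-α := by
  have htpos : 0 < t := lt_of_lt_of_le (by positivity) hκs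
  rw [div_le_iff₀ (by positivity)]
  have ht2 : κ^2*s^2 ≤ t^2 := by nlinarith [hκs, mul_pos hκpos hspos]
  have h9 : (1-α)*(κ^2*s^2) ≤ (1-α)*t^2 := mul_le_mul_of_nonneg_left ht2 (by linarith)
  have h10 : (1-α)*(κ^2*s^2) = α*s^2 := by linear_combination s^2*hκ2
  nlinarith [h9, h10]

lemma cc_le (α Θ θ0 μ σ : ℝ) (hα0 : 0 < α) (hα1 : α < 1) (hσ : 0 < σ)
    (hC : Θ*μ + θ0 + Real.sqrt (α/(1-α)) * (|Θ| * σ) ≤ 0)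
    (P : Measure ℝ) (hP : IsProbabilityMeasure P) (hL2 : MemLp id 2 P)
    (hmean : (∫ x, x ∂P) = μ) (hvar : (∫ x, (x - μ)^2 ∂P) = σ^2) :
    ENNReal.ofReal α ≤ P {x : ℝ | Θ * x + θ0 ≤ 0} := by
  have h1α : 0 < 1 - α := by linarith
  have hx1 : Integrable (fun x : ℝ => x) P := hL2.integrable one_le_two
  have hx2i : ∫ x, x^2 ∂P = σ^2 + μ^2 := by
    have h1 := int_affine_sq P hL2 1 (-μ)
    have h2 : ∫ x, (1*x + -μ)^2 ∂P = σ^2 := by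
      rw [← hvar]; exact integral_congr_ae (.of_forall fun x => by ring)
    rw [h2, hmean] at h1; linarith [h1]
  by_cases hΘ : Θ = 0
  · subst hΘ
    have hm0 : θ0 ≤ 0 := by
      simpa using hC
    have hss : {x : ℝ | 0 * x + θ0 ≤ 0} = Set.univ := by
      ext x; simp; linarith
    rw [hss, measure_univ]
    exact ENNReal.ofReal_le_one.mpr hα1.le
  · set m := Θ*μ + θ0 with hm
    set s := |Θ| * σ with hs
    have hspos : 0 < s := mul_pos (abs_pos.mpr hΘ) hσ
    set κ := Real.sqrt (α/(1-α)) with hκ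
    have hκpos : 0 < κ := Real.sqrt_pos.mpr (by positivity)
    have hκ2 : κ^2 * (1-α) = α := by
      rw [hκ, Real.sq_sqrt (by positivity)]; field_simp
    set t := -m with ht
    have hκs : κ * s ≤ t := by rw [ht]; linarith [hC]
    have htpos : 0 < t := lt_of_lt_of_le (by positivity) hκs
    set u := s^2/t with hu
    have hupos : 0 < u := by positivity
    -- second moment of shifted loss
    have hint : Integrable (fun x => (Θ*x + θ0 - m + u)^2) P := by
      have : MemLp (fun x => Θ*x + (θ0 - m + u)) 2 P :=
        (hL2.const_mul Θ).add (memLp_const (θ0 - m + u))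
      have h2 := this.integrable_sq
      exact h2.congr (Filter.Eventually.of_forall fun x => by ring_nf)
    have hE2 : ∫ x, (Θ*x + θ0 - m + u)^2 ∂P = s^2 + u^2 := by
      have h1 : ∫ x, (Θ*x + θ0 - m + u)^2 ∂P = ∫ x, (Θ*x + (θ0 - m + u))^2 ∂P :=
        integral_congr_ae (.of_forall fun x => by ring)
      rw [h1, int_affine_sq P hL2 Θ (θ0 - m + u), hmean, hx2i]
      have habs : |Θ|^2 = Θ^2 := sq_abs Θ
      rw [hs, hm]; linear_combination (-σ^2) * habs
    -- Markov / Cantelli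
    have hmark := mul_meas_ge_le_integral_of_nonneg
      (Filter.Eventually.of_forall (fun x => sq_nonneg (Θ*x + θ0 - m + u)) :
        0 ≤ᶠ[ae P] fun x => (Θ*x + θ0 - m + u)^2) hint ((t+u)^2)
    rw [hE2] at hmark
    have hsub : {x : ℝ | 0 < Θ*x + θ0} ⊆ {x : ℝ | (t+u)^2 ≤ (Θ*x + θ0 - m + u)^2} := by
      intro x hx
      have h1 : t + u ≤ Θ*x + θ0 - m + u := by
        simp only [Set.mem_setOf_eq] at hx; rw [ht]; linarith
      exact pow_le_pow_left₀ (by positivity) h1 2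
    have hfin : P {x : ℝ | (t+u)^2 ≤ (Θ*x + θ0 - m + u)^2} ≠ ⊤ := measure_ne_top _ _
    have h5 : (P {x : ℝ | 0 < Θ*x + θ0}).toReal ≤ (s^2 + u^2)/(t+u)^2 := by
      have hmono : (P {x : ℝ | 0 < Θ*x + θ0}).toReal
          ≤ (P {x : ℝ | (t+u)^2 ≤ (Θ*x + θ0 - m + u)^2}).toReal :=
        ENNReal.toReal_mono hfin (measure_mono hsub)
      have h6 : (P {x : ℝ | (t+u)^2 ≤ (Θ*x + θ0 - m + u)^2}).toReal
          ≤ (s^2 + u^2)/(t+u)^2 := by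
        rw [le_div_iff₀ (by positivity)]
        rw [measureReal_def] at hmark
        nlinarith [hmark]
      linarith
    have heq : (s^2 + u^2)/(t+u)^2 = s^2/(s^2+t^2) := by
      rw [hu]; field_simp; ring
    have h7 : s^2/(s^2+t^2) ≤ 1-α := aux7 α s t κ h1α hspos hκpos hκ2 hκs
    have h8 : P {x : ℝ | 0 < Θ*x + θ0} ≤ ENNReal.ofReal (1-α) := by
      rw [ENNReal.le_ofReal_iff_toReal_le (measure_ne_top _ _) (by linarith)]
      rw [heq] at h5; linarith
    have hcm : MeasurableSet {x : ℝ | 0 < Θ*x + θ0} :=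
      measurableSet_lt measurable_const (by fun_prop)
    have hcompl : {x : ℝ | 0 < Θ*x + θ0}ᶜ = {x : ℝ | Θ*x + θ0 ≤ 0} := by
      ext x; simp [not_lt]
    rw [← hcompl, prob_compl_eq_one_sub hcm]
    calc ENNReal.ofReal α = 1 - ENNReal.ofReal (1-α) := by
          rw [← ENNReal.ofReal_one, ← ENNReal.ofReal_sub 1 (by linarith)]
          norm_num
      _ ≤ 1 - P {x : ℝ | 0 < Θ*x + θ0} := tsub_le_tsub_left h8 1

lemma C_of_cvar (α Θ θ0 μ σ : ℝ) (hα0 : 0 < α) (hα1 : α < 1) (hσ : 0 < σ)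
    (h : ∀ P : Measure ℝ, IsProbabilityMeasure P → MemLp id 2 P → (∫ x, x ∂P) = μ →
      (∫ x, (x - μ)^2 ∂P) = σ^2 →
      (⨅ β : ℝ, (β + (1 - α)⁻¹ * ∫ x, max (Θ * x + θ0 - β) 0 ∂P)) ≤ 0) :
    Θ*μ + θ0 + Real.sqrt (α/(1-α)) * (|Θ| * σ) ≤ 0 := by
  have h1α : 0 < 1 - α := by linarith
  have hc1 : 1 ≤ (1 - α)⁻¹ := by rw [le_inv_comm₀ one_pos h1α]; linarith
  set κ := Real.sqrt (α/(1-α)) with hκ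
  have hκ0 : 0 ≤ κ := Real.sqrt_nonneg _
  have hκsq : κ^2 = α/(1-α) := Real.sq_sqrt (by positivity)
  by_cases hΘ : Θ = 0
  · subst hΘ
    set P := twoPt (1/2) (μ-σ) (μ+σ) with hPd
    have hprob : IsProbabilityMeasure P := tp_isProb _ _ _ (by norm_num) (by norm_num)
    have hm : (∫ x, x ∂P) = μ := by
      rw [hPd, tp_integral _ _ _ (by norm_num) (by norm_num) (fun x => x)]; ring
    have hv : (∫ x, (x - μ)^2 ∂P) = σ^2 := by
      rw [hPd, tp_integral _ _ _ (by norm_num) (by norm_num) (fun x => (x-μ)^2)]; ring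
    have hinf := h P hprob (tp_memL2 _ _ _ (by norm_num) (by norm_num)) hm hv
    have hlb : θ0 ≤ ⨅ β : ℝ, (β + (1 - α)⁻¹ * ∫ x, max (0 * x + θ0 - β) 0 ∂P) := by
      refine le_ciInf fun β => ?_
      have hco : ∫ x, max (0 * x + θ0 - β) 0 ∂P = max (θ0 - β) 0 := by
        rw [show (fun x : ℝ => max (0 * x + θ0 - β) 0) = fun _ : ℝ => max (θ0 - β) 0 by
          funext x; rw [zero_mul, zero_add], integral_const]
        simp
      rw [hco]
      rcases le_or_gt (θ0 - β) 0 with hh | hh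
      · rw [max_eq_right hh]
        simp only [mul_zero, add_zero]; linarith
      · rw [max_eq_left hh.le]
        nlinarith [hh, hc1]
    simp only [zero_mul, zero_add, abs_zero, zero_mul, mul_zero, add_zero]
    linarith [le_trans hlb hinf]
  · set sgn : ℝ := if 0 < Θ then 1 else -1 with hsgn_def
    have hsgn : Θ * sgn = |Θ| := by
      rcases lt_trichotomy Θ 0 with hlt | heq | hgt
      · rw [hsgn_def, if_neg (not_lt.mpr hlt.le), abs_of_neg hlt]; ring
      · exact absurd heq hΘ
      · rw [hsgn_def, if_pos hgt, abs_of_pos hgt]; ring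
    have hsgn2 : sgn^2 = 1 := by rw [hsgn_def]; split_ifs <;> norm_num
    set c0 := Real.sqrt ((1-α)/α) with hc0
    have hc00 : 0 ≤ c0 := Real.sqrt_nonneg _
    have hc0sq : c0^2 = (1-α)/α := Real.sq_sqrt (by positivity)
    have hc0k : α * c0 = (1-α) * κ := by
      refine sq_eq_sq₀ (by positivity) (by positivity) |>.mp ?_
      rw [mul_pow, mul_pow, hc0sq, hκsq]
      field_simp
    set ca := sgn * (c0 * σ) with hca
    set cb := sgn * (κ * σ) with hcb
    have hmean2 : α * ca = (1-α) * cb := by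
      rw [hca, hcb]; linear_combination (sgn*σ) * hc0k
    have e3 : α*c0^2 + (1-α)*κ^2 = 1 := by
      rw [hc0sq, hκsq]; field_simp; ring
    have hvar2 : α*ca^2 + (1-α)*cb^2 = σ^2 := by
      calc α*ca^2 + (1-α)*cb^2 = sgn^2 * ((α*c0^2 + (1-α)*κ^2) * σ^2) := by
            rw [hca, hcb]; ring
        _ = σ^2 := by rw [hsgn2, e3]; ring
    set a := μ - ca with hadef
    set b := μ + cb with hbdef
    set P := twoPt α a b with hPd
    have hprob : IsProbabilityMeasure P := tp_isProb _ _ _ hα0.le hα1.le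
    have hm : (∫ x, x ∂P) = μ := by
      rw [hPd, tp_integral _ _ _ hα0.le hα1.le (fun x => x)]
      rw [hadef, hbdef]; linear_combination (-1) * hmean2
    have hv : (∫ x, (x - μ)^2 ∂P) = σ^2 := by
      rw [hPd, tp_integral _ _ _ hα0.le hα1.le (fun x => (x-μ)^2)]
      rw [hadef, hbdef]; linear_combination hvar2
    have hinf := h P hprob (tp_memL2 _ _ _ hα0.le hα1.le) hm hv
    set vlo := Θ*a + θ0 with hvlo
    set vhi := Θ*b + θ0 with hvhi
    have hvhival : vhi = Θ*μ + θ0 + |Θ| * (κ*σ) := by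
      rw [hvhi, hbdef, hcb]; linear_combination (κ*σ) * hsgn
    have hlb : vhi ≤ ⨅ β : ℝ, (β + (1 - α)⁻¹ * ∫ x, max (Θ * x + θ0 - β) 0 ∂P) := by
      refine le_ciInf fun β => ?_
      have hco : ∫ x, max (Θ * x + θ0 - β) 0 ∂P
          = α * max (vlo - β) 0 + (1-α) * max (vhi - β) 0 := by
        rw [hPd, tp_integral _ _ _ hα0.le hα1.le (fun x => max (Θ * x + θ0 - β) 0)]
      rw [hco]
      have hm1 : 0 ≤ max (vlo - β) 0 := le_max_right _ _
      have hm2 : 0 ≤ max (vhi - β) 0 := le_max_right _ _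
      have hXnn : 0 ≤ α * max (vlo - β) 0 + (1-α) * max (vhi - β) 0 :=
        add_nonneg (mul_nonneg hα0.le hm1) (mul_nonneg (by linarith) hm2)
      have hcnn : (0:ℝ) ≤ (1-α)⁻¹ := by positivity
      rcases le_or_gt vhi β with hh | hh
      · have := mul_nonneg hcnn hXnn
        linarith
      · have hmx : max (vhi - β) 0 = vhi - β := max_eq_left (by linarith)
        rw [hmx]
        have hcc : (1-α)⁻¹ * (1-α) = 1 := inv_mul_cancel₀ (ne_of_gt h1α)
        have hterm : 0 ≤ (1-α)⁻¹ * α * max (vlo - β) 0 :=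
          mul_nonneg (mul_nonneg hcnn hα0.le) hm1
        have hexp : β + (1-α)⁻¹ * (α * max (vlo - β) 0 + (1-α) * (vhi - β))
            = β + (1-α)⁻¹ * α * max (vlo - β) 0 + ((1-α)⁻¹ * (1-α)) * (vhi - β) := by
          ring
        rw [hexp, hcc]
        linarith
    have := le_trans hlb hinf
    rw [hvhival] at this
    linarith [this]

lemma aux_pt (σ t : ℝ) (hσ : 0 < σ) (ht : 0 < t) :
    (t^2/(σ^2+t^2))*(σ^2/t) = (1-(t^2/(σ^2+t^2)))*t ∧
    (t^2/(σ^2+t^2))*(σ^2/t)^2 + (1-(t^2/(σ^2+t^2)))*t^2 = σ^2 := by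
  have h1 : σ^2+t^2 > 0 := by positivity
  constructor <;> (field_simp; ring)

lemma C_of_cc (α Θ θ0 μ σ : ℝ) (hα0 : 0 < α) (hα1 : α < 1) (hσ : 0 < σ)
    (h : ∀ P : Measure ℝ, IsProbabilityMeasure P → MemLp id 2 P → (∫ x, x ∂P) = μ →
      (∫ x, (x - μ)^2 ∂P) = σ^2 →
      ENNReal.ofReal α ≤ P {x : ℝ | Θ * x + θ0 ≤ 0}) :
    Θ*μ + θ0 + Real.sqrt (α/(1-α)) * (|Θ| * σ) ≤ 0 := by
  have h1α : 0 < 1 - α := by linarith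
  set κ := Real.sqrt (α/(1-α)) with hκ
  have hκpos : 0 < κ := Real.sqrt_pos.mpr (by positivity)
  have hκsq : κ^2 = α/(1-α) := Real.sq_sqrt (by positivity)
  by_cases hΘ : Θ = 0
  · subst hΘ
    set P := twoPt (1/2) (μ-σ) (μ+σ) with hPd
    have hprob : IsProbabilityMeasure P := tp_isProb _ _ _ (by norm_num) (by norm_num)
    have hm : (∫ x, x ∂P) = μ := by
      rw [hPd, tp_integral _ _ _ (by norm_num) (by norm_num) (fun x => x)]; ring
    have hv : (∫ x, (x - μ)^2 ∂P) = σ^2 := by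
      rw [hPd, tp_integral _ _ _ (by norm_num) (by norm_num) (fun x => (x-μ)^2)]; ring
    have hcc := h P hprob (tp_memL2 _ _ _ (by norm_num) (by norm_num)) hm hv
    simp only [abs_zero, zero_mul, mul_zero, add_zero, zero_add]
    by_contra hpos
    push_neg at hpos
    have hempty : {x : ℝ | 0 * x + θ0 ≤ 0} = ∅ := by
      ext x; simp; linarith
    rw [hempty, measure_empty] at hcc
    exact absurd hcc (not_le.mpr (ENNReal.ofReal_pos.mpr hα0))
  · by_contra hpos
    push_neg at hpos
    set sgn : ℝ := if 0 < Θ then 1 else -1 with hsgn_def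
    have hsgn : Θ * sgn = |Θ| := by
      rcases lt_trichotomy Θ 0 with hlt | heq | hgt
      · rw [hsgn_def, if_neg (not_lt.mpr hlt.le), abs_of_neg hlt]; ring
      · exact absurd heq hΘ
      · rw [hsgn_def, if_pos hgt, abs_of_pos hgt]; ring
    have hsgn2 : sgn^2 = 1 := by rw [hsgn_def]; split_ifs <;> norm_num
    have hTpos : 0 < |Θ| := abs_pos.mpr hΘ
    set m := Θ*μ + θ0 with hm
    -- choose t with 0 < t < κ*σ, 0 < m + |Θ| * t, m - |Θ| * σ^2/t ≤ 0
    obtain ⟨t, htpos, htκ, hB, hA⟩ :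
        ∃ t : ℝ, 0 < t ∧ t < κ*σ ∧ 0 < m + |Θ| * t ∧ m - |Θ| * (σ^2/t) ≤ 0 := by
      rcases le_or_gt m 0 with hm0 | hm0
      · refine ⟨(-m/|Θ| + κ*σ)/2, ?_, ?_, ?_, ?_⟩
        · have : -m/|Θ| < κ*σ := by
            rw [div_lt_iff₀ hTpos]
            nlinarith [hpos]
          have hr0 : 0 ≤ -m/|Θ| := div_nonneg (by linarith) hTpos.le
          linarith
        · have : -m/|Θ| < κ*σ := by
            rw [div_lt_iff₀ hTpos]
            nlinarith [hpos]
          linarith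
        · have hr : -m/|Θ| < (-m/|Θ| + κ*σ)/2 := by
            have : -m/|Θ| < κ*σ := by
              rw [div_lt_iff₀ hTpos]; nlinarith [hpos]
            linarith
          rw [div_lt_iff₀ hTpos] at hr
          nlinarith [hr]
        · have hr0 : 0 ≤ -m/|Θ| := div_nonneg (by linarith) hTpos.le
          have ht0 : 0 < (-m/|Θ| + κ*σ)/2 := by positivity
          have : 0 < |Θ| * (σ^2/((-m/|Θ| + κ*σ)/2)) := by positivity
          linarith
      · refine ⟨min (κ*σ/2) (|Θ| * σ^2/m), lt_min (by positivity) (by positivity), ?_, ?_, ?_⟩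
        · have : min (κ*σ/2) (|Θ| * σ^2/m) ≤ κ*σ/2 := min_le_left _ _
          have hks : 0 < κ*σ := by positivity
          linarith
        · have : 0 < min (κ*σ/2) (|Θ| * σ^2/m) := lt_min (by positivity) (by positivity)
          nlinarith [this, hTpos]
        · have hle : min (κ*σ/2) (|Θ| * σ^2/m) ≤ |Θ| * σ^2/m := min_le_right _ _
          have htp : 0 < min (κ*σ/2) (|Θ| * σ^2/m) := lt_min (by positivity) (by positivity)
          have h1 : min (κ*σ/2) (|Θ| * σ^2/m) * m ≤ |Θ| * σ^2 := (le_div_iff₀ hm0).mp hle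
          rw [sub_nonpos, ← mul_div_assoc, le_div_iff₀ htp]
          nlinarith [h1]
    set p := t^2/(σ^2+t^2) with hpdef
    have hp0 : 0 ≤ p := by positivity
    have hp1 : p ≤ 1 := by
      rw [hpdef, div_le_one (by positivity)]; nlinarith
    have hpα : p < α := by
      have ht2 : t^2 < κ^2*σ^2 := by nlinarith [htκ, htpos, mul_pos hκpos hσ]
      have e : (1-α)*κ^2 = α := by rw [hκsq]; field_simp
      rw [hpdef, div_lt_iff₀ (by positivity)]
      nlinarith [ht2, e]
    set A := μ - sgn*(σ^2/t) with hAdef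
    set B := μ + sgn*t with hBdef
    set P := twoPt p A B with hPd
    have hprob : IsProbabilityMeasure P := tp_isProb _ _ _ hp0 hp1
    have hz : p*(σ^2/t) = (1-p)*t := by
      rw [hpdef]; exact (aux_pt σ t hσ htpos).1
    have hv2 : p*(σ^2/t)^2 + (1-p)*t^2 = σ^2 := by
      rw [hpdef]; exact (aux_pt σ t hσ htpos).2
    have hmean : (∫ x, x ∂P) = μ := by
      rw [hPd, tp_integral _ _ _ hp0 hp1 (fun x => x)]
      rw [hAdef, hBdef]; linear_combination (-sgn)*hz
    have hvar : (∫ x, (x - μ)^2 ∂P) = σ^2 := by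
      rw [hPd, tp_integral _ _ _ hp0 hp1 (fun x => (x-μ)^2)]
      rw [hAdef, hBdef]
      calc p*(μ - sgn*(σ^2/t) - μ)^2 + (1-p)*(μ + sgn*t - μ)^2
          = sgn^2 * (p*(σ^2/t)^2 + (1-p)*t^2) := by ring
        _ = 1 * σ^2 := by rw [hsgn2, hv2]
        _ = σ^2 := one_mul _
    have hSm : MeasurableSet {x : ℝ | Θ*x + θ0 ≤ 0} :=
      measurableSet_le (by fun_prop) measurable_const
    have hAin : A ∈ {x : ℝ | Θ*x + θ0 ≤ 0} := by
      have hval : Θ*A + θ0 = m - |Θ| * (σ^2/t) := by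
        rw [hAdef, hm]; linear_combination (-(σ^2/t))*hsgn
      simp only [Set.mem_setOf_eq, hval]
      linarith [hA]
    have hBnot : B ∉ {x : ℝ | Θ*x + θ0 ≤ 0} := by
      have hval : Θ*B + θ0 = m + |Θ| * t := by
        rw [hBdef, hm]; linear_combination t*hsgn
      simp only [Set.mem_setOf_eq, hval]
      linarith [hB]
    have hPS : P {x : ℝ | Θ*x + θ0 ≤ 0} = ENNReal.ofReal p := by
      rw [hPd, tp_apply _ _ _ hSm, Set.indicator_of_mem hAin,
        Set.indicator_of_notMem hBnot, add_zero]
    have hcc := h P hprob (tp_memL2 _ _ _ hp0 hp1) hmean hvar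
    rw [hPS] at hcc
    have := (ENNReal.ofReal_le_ofReal_iff hp0).mp hcc
    linarith [hpα]

theorem worst_case_cvar_iff_drcc
    (α Θ θ0 μ σ : ℝ) (hα : α ∈ Set.Ioo (0 : ℝ) 1) (hσ : 0 < σ) :
    (∀ P : Measure ℝ, IsProbabilityMeasure P →
        MemLp id 2 P → (∫ x, x ∂P) = μ → (∫ x, (x - μ) ^ 2 ∂P) = σ ^ 2 →
        (⨅ β : ℝ, (β + (1 - α)⁻¹ * ∫ x, max (Θ * x + θ0 - β) 0 ∂P)) ≤ 0) ↔
    (∀ P : Measure ℝ, IsProbabilityMeasure P →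
        MemLp id 2 P → (∫ x, x ∂P) = μ → (∫ x, (x - μ) ^ 2 ∂P) = σ ^ 2 →
        ENNReal.ofReal α ≤ P {x : ℝ | Θ * x + θ0 ≤ 0}) := by
  obtain ⟨hα0, hα1⟩ := hα
  constructor
  · intro h
    have hC := C_of_cvar α Θ θ0 μ σ hα0 hα1 hσ h
    intro P hP hL2 hm hv
    exact cc_le α Θ θ0 μ σ hα0 hα1 hσ hC P hP hL2 hm hv
  · intro h
    have hC := C_of_cc α Θ θ0 μ σ hα0 hα1 hσ h
    intro P hP hL2 hm hv
    exact cvar_le α Θ θ0 μ σ hα0 hα1 hσ hC P hP hL2 hm hv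
end
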